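/- arXiv:1803.05141 — 3 statements merged into one kernel-verified Lean document; each statement's English description precedes it below -/
import Mathlib

section
/- For natural numbers m ≥ 1 and n ≥ 1, B_m divides B_n if and only if m divides n, where B is the balancing sequence. -/
def B : ℕ → ℕ
  | 0 => 0
  | 1 => 1
  | (n + 2) => 6 * B (n + 1) - B n

lemma B_rec (n : ℕ) : B (n + 2) = 6 * B (n + 1) - B n := rfl

lemma B_lt : ∀ n : ℕ, B n < B (n + 1) := by
  intro n
  induction n using Nat.strong_induction_on with
  | _ n ih =>
    match n with
    | 0 => simp [B]
    | 1 => simp [B]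
    | (k + 2) =>
      have h1 : B (k + 1) < B (k + 2) := ih (k + 1) (by omega)
      have e : B (k + 2 + 1) = 6 * B (k + 2) - B (k + 1) := rfl
      omega

lemma B_mono : StrictMono B := strictMono_nat_of_lt_succ B_lt

lemma B_cast (n : ℕ) : (B (n + 2) : ℤ) = 6 * B (n + 1) - B n := by
  have h := (B_lt n).le.trans (Nat.le_mul_of_pos_left _ (by norm_num) : B (n+1) ≤ 6 * B (n+1))
  rw [B_rec]
  push_cast [h]
  ring

lemma B_cop : ∀ n : ℕ, Nat.Coprime (B n) (B (n + 1)) := by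
  intro n
  induction n with
  | zero => simp [B, Nat.Coprime]
  | succ k ih =>
    have hk := B_lt k
    have h2 : B (k + 1 + 1) = 6 * B (k + 1) - B k := rfl
    have hd1 : Nat.gcd (B (k + 1)) (B (k + 1 + 1)) ∣ B (k + 1) := Nat.gcd_dvd_left _ _
    have hd2 : Nat.gcd (B (k + 1)) (B (k + 1 + 1)) ∣ B (k + 1 + 1) := Nat.gcd_dvd_right _ _
    have hdk : Nat.gcd (B (k + 1)) (B (k + 1 + 1)) ∣ B k := by
      have h3 : B k = 6 * B (k + 1) - B (k + 1 + 1) := by omega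
      rw [h3]
      exact Nat.dvd_sub (hd1.mul_left 6) hd2
    have := Nat.dvd_gcd hdk hd1
    rw [ih] at this
    exact Nat.eq_one_of_dvd_one this

lemma B_add (m : ℕ) : ∀ n : ℕ, (B (m + n + 1) : ℤ) = B (m + 1) * B (n + 1) - B m * B n := by
  intro n
  induction n using Nat.strong_induction_on with
  | _ n ih =>
    match n with
    | 0 => simp [B]
    | 1 =>
      have h := B_cast m
      have e1 : B (m + 1 + 1) = B (m + 2) := rfl
      have e2 : B (1 + 1) = 6 := by simp [B]
      have e3 : B 1 = 1 := rfl
      rw [show m + 1 + 1 = m + 2 from rfl, e1, h, e2, e3]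
      push_cast
      ring
    | (k + 2) =>
      have i1 : (B (m + k + 1 + 1) : ℤ) = B (m + 1) * B (k + 1 + 1) - B m * B (k + 1) :=
        ih (k + 1) (by omega)
      have i0 : (B (m + k + 1) : ℤ) = B (m + 1) * B (k + 1) - B m * B k :=
        ih k (by omega)
      have c1 : (B (m + k + 1 + 2) : ℤ) = 6 * B (m + k + 1 + 1) - B (m + k + 1) := B_cast _
      have c2 : (B (k + 1 + 2) : ℤ) = 6 * B (k + 1 + 1) - B (k + 1) := B_cast _
      have c3 : (B (k + 2) : ℤ) = 6 * B (k + 1) - B k := B_cast _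
      have g : (B (m + (k + 2) + 1) : ℤ) = B (m + k + 1 + 2) := by
        rw [show m + (k + 2) + 1 = m + k + 1 + 2 from by omega]
      have g2 : (B (k + 2 + 1) : ℤ) = B (k + 1 + 2) := by
        rw [show k + 2 + 1 = k + 1 + 2 from by omega]
      have g3 : (B (k + 1 + 1) : ℤ) = B (k + 2) := by
        rw [show k + 1 + 1 = k + 2 from by omega]
      rw [g, c1, g2, c2]
      rw [g3] at i1
      rw [c3] at i1 ⊢
      linarith [i1, i0]

lemma B_dvd_mul (m k : ℕ) : B m ∣ B (m * k) := by
  induction k with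
  | zero => simp [B]
  | succ j ih =>
    rcases Nat.eq_zero_or_pos m with hm | hm
    · simp [hm, B]
    · rw [show m * (j + 1) = m * j + (m - 1) + 1 from by
        rw [Nat.mul_succ]; omega]
      rw [← Int.natCast_dvd_natCast, B_add, show m - 1 + 1 = m from by omega]
      obtain ⟨c, hc⟩ := ih
      refine dvd_sub (Dvd.dvd.mul_left dvd_rfl _) ?_
      rw [hc]; push_cast; exact ⟨c * B (m - 1), by ring⟩

theorem stmt2 : ∀ m n : ℕ, 1 ≤ m → 1 ≤ n → (B m ∣ B n ↔ m ∣ n) := by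
  intro m n hm hn
  constructor
  · intro hdvd
    set q := n / m with hq
    set r := n % m with hr
    have hn' : n = m * q + r := (Nat.div_add_mod n m).symm
    have hrm : r < m := Nat.mod_lt _ (by omega)
    by_contra hnd
    have hr1 : 1 ≤ r := by
      rcases Nat.eq_zero_or_pos r with h0 | h1
      · exact absurd (Nat.dvd_of_mod_eq_zero (by omega)) hnd
      · exact h1
    have key : (B n : ℤ) = B (m * q + 1) * B r - B (m * q) * B (r - 1) := by
      rw [hn', show m * q + r = m * q + (r - 1) + 1 from by omega, B_add,
        show r - 1 + 1 = r from by omega]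
    have hBmq : B m ∣ B (m * q) := B_dvd_mul m q
    have hdvd2 : (B m : ℤ) ∣ B (m * q + 1) * B r := by
      have h5 : (B (m * q + 1) * B r : ℤ) = B n + B (m * q) * B (r - 1) := by linarith
      rw [h5]
      exact dvd_add (Int.natCast_dvd_natCast.mpr hdvd)
        (Dvd.dvd.mul_right (Int.natCast_dvd_natCast.mpr hBmq) _)
    have hdvd3 : B m ∣ B (m * q + 1) * B r := by
      rw [← Int.natCast_dvd_natCast]; push_cast; exact hdvd2
    have hcop : Nat.Coprime (B m) (B (m * q + 1)) :=
      Nat.Coprime.coprime_dvd_left hBmq (B_cop (m * q))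
    have hdr : B m ∣ B r := hcop.dvd_of_dvd_mul_left hdvd3
    have hBr : 0 < B r := by
      have h6 := B_mono (show 0 < r from hr1)
      simpa [B] using h6
    have hlt : B r < B m := B_mono hrm
    have := Nat.le_of_dvd hBr hdr
    omega
  · intro ⟨k, hk⟩
    rw [hk]
    exact B_dvd_mul m k
end

section
/- For all natural numbers m > n ≥ 1, B_{m-n} < B_m / B_n (equivalently, B_{m-n} * B_n < B_m), where B is the balancing sequence. -/
private def b : ℕ → ℤ
  | 0 => 0
  | 1 => 1
  | (n + 2) => 6 * b (n + 1) - b n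

private lemma b_mono : ∀ n : ℕ, 0 ≤ b n ∧ b n < b (n + 1) := by
  intro n
  induction n using Nat.twoStepInduction with
  | zero => exact ⟨le_refl 0, by norm_num [b]⟩
  | one => exact ⟨zero_le_one, by norm_num [b]⟩
  | more n ih1 ih2 =>
    obtain ⟨h0, h1⟩ := ih1
    obtain ⟨h0', h1'⟩ := ih2
    constructor
    · show (0 : ℤ) ≤ 6 * b (n + 1) - b n
      nlinarith
    · show 6 * b (n + 1) - b n < 6 * b (n + 2) - b (n + 1)
      have : b (n + 2) = 6 * b (n + 1) - b n := rfl
      nlinarith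

private lemma b_nonneg (n : ℕ) : 0 ≤ b n := (b_mono n).1

private lemma b_lt (n : ℕ) : b n < b (n + 1) := (b_mono n).2

private lemma b_pos (n : ℕ) (hn : 1 ≤ n) : 0 < b n := by
  induction n with
  | zero => omega
  | succ k ih =>
    rcases Nat.eq_zero_or_pos k with h | h
    · subst h; norm_num [b]
    · exact lt_trans (ih h) (b_lt k)

private lemma B_eq (n : ℕ) : (B n : ℤ) = b n := by
  induction n using Nat.twoStepInduction with
  | zero => rfl
  | one => rfl
  | more n ih1 ih2 =>
    have hle : B n ≤ 6 * B (n + 1) := by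
      have : (B n : ℤ) ≤ 6 * (B (n + 1) : ℤ) := by
        rw [ih1, ih2]
        nlinarith [b_nonneg n, b_lt n]
      exact_mod_cast this
    show ((6 * B (n + 1) - B n : ℕ) : ℤ) = 6 * b (n + 1) - b n
    rw [Nat.cast_sub hle]
    push_cast
    rw [ih1, ih2]

private lemma b_add : ∀ n k : ℕ, b (n + k + 1) = b (k + 1) * b (n + 1) - b k * b n := by
  intro n
  induction n using Nat.twoStepInduction with
  | zero => intro k; simp [b]
  | one =>
    intro k
    have : b (k + 2) = 6 * b (k + 1) - b k := rfl
    simp only [b]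
    rw [show 1 + k + 1 = k + 2 from by ring, this]
    ring
  | more n ih1 ih2 =>
    intro k
    have e1 : n + 2 + k + 1 = (n + k + 1) + 2 := by ring
    have e2 : n + 1 + k + 1 = (n + k + 1) + 1 := by ring
    rw [e1]
    show 6 * b ((n + k + 1) + 1) - b (n + k + 1) = _
    rw [← e2, ih1 k, ih2 k]
    have h1 : b (n + 2) = 6 * b (n + 1) - b n := rfl
    have h2 : b (n + 3) = 6 * b (n + 2) - b (n + 1) := rfl
    rw [show n + 2 + 1 = n + 3 from rfl] at *
    rw [h2, h1]
    ring

theorem stmt10 : ∀ m n : ℕ, 1 ≤ n → n < m → B (m - n) * B n < B m := by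
  intro m n hn hnm
  have key : (B (m - n) : ℤ) * B n < (B m : ℤ) := by
    rw [B_eq, B_eq, B_eq]
    set d := m - n with hd
    have hd1 : 1 ≤ d := by omega
    have hm : m = n + (d - 1) + 1 := by omega
    rw [hm, b_add n (d - 1)]
    rw [show d - 1 + 1 = d from by omega]
    have h1 : b n < b (n + 1) := b_lt n
    have h2 : 0 < b n := b_pos n hn
    have h3 : 0 < b d := b_pos d hd1
    have h4 : 0 ≤ b (d - 1) := b_nonneg _
    have h5 : b (d - 1) < b d := by
      have := b_lt (d - 1)
      rwa [show d - 1 + 1 = d from by omega] at this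
    -- b(n+1) > 5 * b n, since b(n+1) = 6 b n - b(n-1) when n ≥ 1... instead use weaker:
    -- need b d * b n < b d * b(n+1) - b(d-1) * b n
    have h6 : 2 * b n < b (n + 1) := by
      obtain ⟨k, rfl⟩ : ∃ k, n = k + 1 := ⟨n - 1, by omega⟩
      have : b (k + 2) = 6 * b (k + 1) - b k := rfl
      rw [this]
      nlinarith [b_nonneg k, b_lt k]
    nlinarith
  exact_mod_cast key
end

section
/- For every natural number n ≥ 1, φ(B_n) ≥ B_{φ(n)}, where φ is Euler's totient function and B is the balancing sequence. -/
namespace Aux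

def P : ℕ → ℕ × ℕ
  | 0 => (1, 0)
  | n+1 => (3 * (P n).1 + 8 * (P n).2, (P n).1 + 3 * (P n).2)

def Y (n : ℕ) : ℕ := (P n).1
def C (n : ℕ) : ℕ := (P n).2

lemma Y_zero : Y 0 = 1 := rfl
lemma C_zero : C 0 = 0 := rfl
lemma Y_succ (n : ℕ) : Y (n+1) = 3 * Y n + 8 * C n := rfl
lemma C_succ (n : ℕ) : C (n+1) = Y n + 3 * C n := rfl

lemma rec2 (n : ℕ) : C n + C (n + 2) = 6 * C (n + 1) := by
  simp only [C_succ, Y_succ]; ring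

lemma B_eq_C : ∀ n, B n = C n := by
  have key : ∀ n, B n = C n ∧ B (n+1) = C (n+1) := by
    intro n
    induction n with
    | zero => exact ⟨rfl, rfl⟩
    | succ n ih =>
      obtain ⟨ih1, ih2⟩ := ih
      refine ⟨ih2, ?_⟩
      show B (n+2) = C (n+2)
      have h2 := rec2 n
      have hB : B (n+2) = 6 * B (n+1) - B n := rfl
      omega
  exact fun n => (key n).1

lemma pell (n : ℕ) : Y n ^ 2 = 8 * C n ^ 2 + 1 := by
  induction n with
  | zero => rfl
  | succ n ih => simp only [Y_succ, C_succ]; nlinarith [ih]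

lemma Y_pos (n : ℕ) : 1 ≤ Y n := by
  induction n with
  | zero => exact le_refl 1
  | succ n ih => simp only [Y_succ]; omega

lemma C_pos {n : ℕ} (h : 1 ≤ n) : 1 ≤ C n := by
  cases n with
  | zero => omega
  | succ n => have := Y_pos n; simp only [C_succ]; omega

lemma C_one : C 1 = 1 := rfl

lemma two_C_le_Y (n : ℕ) : 2 * C n ≤ Y n := by
  have h := pell n
  nlinarith [Y_pos n]

lemma five_C_le (n : ℕ) : 5 * C n ≤ C (n+1) := by
  have := two_C_le_Y n; simp only [C_succ]; omega

lemma C_mono_succ (n : ℕ) : C n ≤ C (n+1) := by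
  have := two_C_le_Y n; simp only [C_succ]; omega

lemma pow5_le (m j : ℕ) : 5 ^ j * C m ≤ C (m + j) := by
  induction j with
  | zero => simp
  | succ j ih =>
    have h5 := five_C_le (m + j)
    calc 5 ^ (j+1) * C m = 5 * (5 ^ j * C m) := by ring
    _ ≤ 5 * C (m + j) := by omega
    _ ≤ C (m + j + 1) := h5

lemma YC_le_pow6 (n : ℕ) : Y n ≤ 6 ^ n ∧ 3 * C n ≤ 6 ^ n := by
  induction n with
  | zero => simp [Y_zero, C_zero]
  | succ n ih =>
    obtain ⟨ih1, ih2⟩ := ih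
    simp only [Y_succ, C_succ, pow_succ]
    omega

lemma C_le_pow6 (n : ℕ) : C n ≤ 6 ^ n := by
  have := (YC_le_pow6 n).2; omega

lemma addf (m : ℕ) : ∀ a, C (a + m) = C a * Y m + Y a * C m ∧
    Y (a + m) = Y a * Y m + 8 * C a * C m := by
  intro a
  induction a with
  | zero => simp [Y_zero, C_zero]
  | succ a ih =>
    have h1 : a + 1 + m = (a + m) + 1 := by ring
    rw [h1]
    simp only [Y_succ, C_succ]
    constructor <;> [nlinarith [ih.1, ih.2]; nlinarith [ih.1, ih.2]]

-- mimic signatures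

lemma not_dvd_Y {q m : ℕ} (hq : q.Prime) (h : q ∣ C m) : ¬ q ∣ Y m := by
  intro hy
  have h2 : q ∣ Y m ^ 2 := hy.pow (by norm_num)
  rw [pell] at h2
  have h3 : q ∣ 8 * C m ^ 2 := (h.pow (by norm_num)).mul_left 8
  have h1 : q ∣ 1 := (Nat.dvd_add_right h3).mp h2
  have := Nat.le_of_dvd one_pos h1
  have := hq.two_le
  omega

lemma dvd_C_add {q m a : ℕ} (hq : q.Prime) (hm : q ∣ C m) :
    q ∣ C (a + m) ↔ q ∣ C a := by
  have hadd := (addf m a).1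
  constructor
  · intro h
    have h2 : q ∣ C a * Y m := by
      have h4 : q ∣ Y a * C m := hm.mul_left _
      rw [hadd] at h
      rw [add_comm] at h
      exact (Nat.dvd_add_right h4).mp h
    rcases (Nat.Prime.dvd_mul hq).mp h2 with h3 | h3
    · exact h3
    · exact absurd h3 (not_dvd_Y hq hm)
  · intro h
    rw [hadd]
    exact Nat.dvd_add (h.mul_right _) (hm.mul_left _)

lemma dvd_C_mod {q m n : ℕ} (hq : q.Prime) (hm : q ∣ C m) (hn : q ∣ C n) :
    q ∣ C (n % m) := by
  have key : ∀ k a, q ∣ C (a + k * m) ↔ q ∣ C a := by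
    intro k
    induction k with
    | zero => simp
    | succ k ih =>
      intro a
      have : a + (k+1) * m = (a + k * m) + m := by ring
      rw [this, dvd_C_add hq hm, ih]
  have h := key (n / m) (n % m)
  rw [Nat.mod_add_div'] at h
  exact h.mp hn

lemma dvd_C_gcd {q : ℕ} (hq : q.Prime) :
    ∀ m, ∀ n, q ∣ C m → q ∣ C n → q ∣ C (Nat.gcd m n) := by
  intro m
  induction m using Nat.strong_induction_on with
  | _ m ih =>
    intro n hm hn
    match m, hm with
    | 0, hm => simpa [Nat.gcd_zero_left] using hn
    | (m+1), hm =>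
      rw [Nat.gcd_rec]
      exact ih _ (Nat.mod_lt _ (by omega)) _ (dvd_C_mod hq hm hn) hm

lemma key_dvd {q : ℕ} (hq : q.Prime) (h5 : 5 ≤ q) :
    q ∣ C (q - 1) ∨ q ∣ C (q + 1) := by
  haveI : Fact q.Prime := ⟨hq⟩
  set r : Matrix (Fin 2) (Fin 2) (ZMod q) := !![0, 8; 1, 0] with hrdef
  set s : Matrix (Fin 2) (Fin 2) (ZMod q) := (3 : ZMod q) • 1 with hsdef
  set u : Matrix (Fin 2) (Fin 2) (ZMod q) := s + r with hudef
  have hu : u = !![3, 8; 1, 3] := by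
    show (3 : ZMod q) • 1 + r = _
    show (3 : ZMod q) • 1 + !![0,8;1,0] = _
    rw [Matrix.one_fin_two, Matrix.smul_of]
    norm_num [Matrix.smul_cons, Matrix.smul_empty]
  have hr2 : r * r = (8 : ZMod q) • 1 := by
    show !![(0:ZMod q),8;1,0] * !![0,8;1,0] = _
    rw [Matrix.mul_fin_two, Matrix.one_fin_two, Matrix.smul_of]
    norm_num [Matrix.smul_cons, Matrix.smul_empty]
  -- u ^ n = Y n • 1 + C n • r
  have upow : ∀ n, u ^ n = ((Y n : ZMod q)) • (1 : Matrix (Fin 2) (Fin 2) (ZMod q)) + ((C n : ZMod q)) • r := by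
    intro n
    induction n with
    | zero => simp [Y_zero, C_zero]
    | succ n ih =>
      rw [pow_succ, ih]
      show _ = ((Y (n+1) : ZMod q)) • (1 : Matrix (Fin 2) (Fin 2) (ZMod q)) + ((C (n+1) : ZMod q)) • r
      rw [Y_succ, C_succ]
      push_cast
      simp only [u, s, add_mul, mul_add, smul_mul_assoc, mul_smul_comm, one_mul, mul_one,
        smul_smul, hr2, smul_add, add_smul]
      module
  have hcom : Commute s r := by
    simp only [Commute, SemiconjBy, s, smul_mul_assoc, mul_smul_comm, one_mul, mul_one]
  have huq : u ^ q = s ^ q + r ^ q := add_pow_char_of_commute q hcom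
  have hsq : s ^ q = s := by
    simp only [s, smul_pow, one_pow, ZMod.pow_card]
  have hqodd : q % 2 = 1 := Nat.odd_iff.mp (hq.odd_of_ne_two (by omega))
  set t := q / 2 with ht
  have hqt : q = 2 * t + 1 := by omega
  have h8 : (8 : ZMod q) ≠ 0 := by
    intro h0
    have : ((8 : ℕ) : ZMod q) = 0 := by push_cast; exact h0
    rw [ZMod.natCast_eq_zero_iff] at this
    have : q ∣ 2 ^ 3 := by norm_num at this ⊢; exact this
    have := hq.dvd_of_dvd_pow this
    have := Nat.le_of_dvd (by norm_num) this
    omega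
  have hrq : r ^ q = ((8 : ZMod q) ^ t) • r := by
    have e0 : r ^ q = r ^ (2 * t + 1) := congrArg (fun k => r ^ k) hqt
    rw [e0, pow_succ, pow_mul]
    have e1 : r ^ 2 = (8 : ZMod q) • 1 := by rw [sq]; exact hr2
    rw [e1, smul_pow, one_pow, smul_mul_assoc, one_mul]
  set ε : ZMod q := (8 : ZMod q) ^ t with hε
  have hε2 : ε * ε = 1 := by
    rw [hε, ← pow_add]
    have h2t : t + t = q - 1 := by omega
    rw [h2t, ZMod.pow_card_sub_one_eq_one h8]
  have hεcases := mul_self_eq_one_iff.mp hε2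
  have hentry : ∀ n, u ^ n = 1 → q ∣ C n := by
    intro n h
    have h2 : ((Y n : ZMod q)) • (1 : Matrix (Fin 2) (Fin 2) (ZMod q)) + ((C n : ZMod q)) • r = 1 := (upow n).symm.trans h
    have h3 : ((Y n : ZMod q)) • (1 : Matrix (Fin 2) (Fin 2) (ZMod q)) + ((C n : ZMod q)) • !![0,8;1,0] = 1 := h2
    have h10 := congrFun (congrFun h3 1) 0
    simp [Matrix.add_apply, Matrix.smul_apply, Matrix.one_apply] at h10
    rwa [ZMod.natCast_eq_zero_iff] at h10
  have hss : s * s = (9 : ZMod q) • (1 : Matrix (Fin 2) (Fin 2) (ZMod q)) := by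
    simp only [s, smul_mul_assoc, mul_smul_comm, one_mul, smul_smul]
    norm_num
  rcases hεcases with h1 | h1
  · left
    have huqu : u ^ q = u := by rw [huq, hsq, hrq, h1, one_smul]
    have hunit : IsUnit u := by
      rw [hu, Matrix.isUnit_iff_isUnit_det, Matrix.det_fin_two_of]
      norm_num
    have hq1 : u ^ (q - 1) * u = 1 * u := by
      rw [one_mul, ← pow_succ]
      have : q - 1 + 1 = q := by omega
      rw [this, huqu]
    have := hunit.mul_right_cancel hq1
    exact hentry _ this
  · right
    have huqu : u ^ q = s - r := by
      rw [huq, hsq, hrq, h1, neg_smul, one_smul, sub_eq_add_neg]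
    have hq1 : u ^ (q + 1) = 1 := by
      rw [pow_succ, huqu]
      show (s - r) * (s + r) = 1
      have : (s - r) * (s + r) = s * s - r * r + (s * r - r * s) := by noncomm_ring
      rw [this, hcom.eq, sub_self, add_zero, hss, hr2, ← sub_smul]
      norm_num
    exact hentry _ hq1

lemma mod6 : ∀ k, C (2*k) % 6 = 0 ∧ (C (2*k+1) % 6 = 1 ∨ C (2*k+1) % 6 = 5) := by
  intro k
  induction k with
  | zero => simp [C_zero, C_one]
  | succ k ih =>
    have h1 := rec2 (2*k)
    have h2 := rec2 (2*k+1)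
    have e1 : 2*k+2 = 2*(k+1) := by ring
    have e2 : 2*k+1+2 = 2*(k+1)+1 := by ring
    rw [e1] at h1
    rw [e2] at h2
    have e3 : 2*k+1+1 = 2*(k+1) := by ring
    rw [e3] at h2
    omega

lemma prime_ge_five {n q : ℕ} (hn : n % 2 = 1) (hq : q.Prime) (hd : q ∣ C n) : 5 ≤ q := by
  obtain ⟨k, rfl⟩ : ∃ k, n = 2*k+1 := ⟨n/2, by omega⟩
  have hm := (mod6 k).2
  have h2 : q ≠ 2 := by
    rintro rfl
    obtain ⟨c, hc⟩ := hd
    omega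
  have h3 : q ≠ 3 := by
    rintro rfl
    obtain ⟨c, hc⟩ := hd
    omega
  have := hq.two_le
  rcases Nat.lt_or_ge q 5 with h | h
  · interval_cases q
    · omega
    · omega
    · exact absurd hq (by norm_num)
  · exact h

lemma factor_large {n q : ℕ} (hn : n % 2 = 1) (h3 : 3 ≤ n) (hq : q.Prime) (hd : q ∣ C n) :
    2 * n.minFac - 1 ≤ q := by
  have h5 : 5 ≤ q := prime_ge_five hn hq hd
  have hgcd : ∀ w : ℕ, 1 ≤ w → q ∣ C w → (Nat.gcd n w) ∣ w → True := fun _ _ _ _ => trivial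
  have main : ∀ w : ℕ, q ∣ C w → 2 * n.minFac ≤ Nat.gcd n w + Nat.gcd n w := by
    intro w hw
    have hg := dvd_C_gcd hq n w hd hw
    set g := Nat.gcd n w with hgdef
    have hgn : g ∣ n := Nat.gcd_dvd_left n w
    have hg1 : g ≠ 1 := by
      rintro h1
      rw [h1, C_one] at hg
      have := Nat.le_of_dvd one_pos hg
      omega
    have hg0 : 1 ≤ g := Nat.pos_of_dvd_of_pos hgn (by omega)
    have hmf : n.minFac ≤ g := Nat.minFac_le_of_dvd (by omega) hgn
    omega
  rcases key_dvd hq h5 with h | h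
  · -- g ∣ q - 1, g odd, q-1 even so 2g ∣ q-1
    have hg := dvd_C_gcd hq n (q-1) hd h
    set g := Nat.gcd n (q-1) with hgdef
    have hgn : g ∣ n := Nat.gcd_dvd_left _ _
    have hgw : g ∣ q - 1 := Nat.gcd_dvd_right _ _
    have hg1 : g ≠ 1 := by
      rintro h1
      rw [h1, C_one] at hg
      have := Nat.le_of_dvd one_pos hg
      omega
    have hmf : n.minFac ≤ g := Nat.minFac_le_of_dvd
      (by have := Nat.pos_of_dvd_of_pos hgn (by omega); omega) hgn
    have hgodd : ¬ 2 ∣ g := by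
      intro h2
      have : 2 ∣ n := h2.trans hgn
      omega
    have hcop : Nat.Coprime 2 g := by
      exact Nat.coprime_two_left.mpr (Nat.odd_iff.mpr (by omega))
    have hqodd : q % 2 = 1 := Nat.odd_iff.mp (hq.odd_of_ne_two (by omega))
    have h2dvd : 2 ∣ q - 1 := by omega
    have h2g : 2 * g ∣ q - 1 := Nat.Coprime.mul_dvd_of_dvd_of_dvd hcop h2dvd hgw
    have := Nat.le_of_dvd (by omega) h2g
    omega
  · have hg := dvd_C_gcd hq n (q+1) hd h
    set g := Nat.gcd n (q+1) with hgdef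
    have hgn : g ∣ n := Nat.gcd_dvd_left _ _
    have hgw : g ∣ q + 1 := Nat.gcd_dvd_right _ _
    have hg1 : g ≠ 1 := by
      rintro h1
      rw [h1, C_one] at hg
      have := Nat.le_of_dvd one_pos hg
      omega
    have hmf : n.minFac ≤ g := Nat.minFac_le_of_dvd
      (by have := Nat.pos_of_dvd_of_pos hgn (by omega); omega) hgn
    have hgodd : ¬ 2 ∣ g := by
      intro h2
      have : 2 ∣ n := h2.trans hgn
      omega
    have hcop : Nat.Coprime 2 g := by
      exact Nat.coprime_two_left.mpr (Nat.odd_iff.mpr (by omega))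
    have hqodd : q % 2 = 1 := Nat.odd_iff.mp (hq.odd_of_ne_two (by omega))
    have h2dvd : 2 ∣ q + 1 := by omega
    have h2g : 2 * g ∣ q + 1 := Nat.Coprime.mul_dvd_of_dvd_of_dvd hcop h2dvd hgw
    have := Nat.le_of_dvd (by omega) h2g
    omega

lemma bernT (e : ℕ) : ∀ q, e ≤ q → q ^ e * (q - e) ≤ (q - 1) ^ e * q := by
  induction e with
  | zero => intro q _; simpa using Nat.le_refl q
  | succ e ih =>
    intro q hq
    obtain ⟨a, rfl⟩ : ∃ a, q = e + 1 + a := ⟨q - e - 1, by omega⟩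
    have ihq := ih (e + 1 + a) (by omega)
    have h1 : (e+1+a) - (e+1) = a := by omega
    have h2 : (e+1+a) - e = a + 1 := by omega
    have h3 : (e+1+a) - 1 = e + a := by omega
    rw [h1, h3]
    rw [h2, h3] at ihq
    calc (e+1+a)^(e+1) * a = (e+1+a)^e * ((e+1+a) * a) := by ring
    _ ≤ (e+1+a)^e * ((a+1) * (e+a)) := by
        apply Nat.mul_le_mul_left
        nlinarith
    _ = ((e+1+a)^e * (a+1)) * (e+a) := by ring
    _ ≤ ((e+a)^e * (e+1+a)) * (e+a) := Nat.mul_le_mul_right _ ihq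
    _ = (e+a)^(e+1) * (e+1+a) := by ring

lemma bern {e q : ℕ} (h : e + 1 ≤ q) : q ^ e ≤ (q - 1) ^ e * q := by
  have := bernT e q (by omega)
  have h1 : 1 ≤ q - e := by omega
  calc q ^ e = q ^ e * 1 := by ring
  _ ≤ q ^ e * (q - e) := Nat.mul_le_mul_left _ h1
  _ ≤ (q - 1) ^ e * q := this

lemma seven {q : ℕ} (h : 5 ≤ q) : q ^ 7 ≤ (q - 1) ^ 7 * q := by
  rcases Nat.lt_or_ge q 8 with h8 | h8
  · interval_cases q <;> norm_num
  · exact bern h8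

open Finset in
lemma prod_bound {F : Finset ℕ} (e : ℕ) (h : ∀ p ∈ F, p ^ e ≤ (p - 1) ^ e * p) :
    (∏ p ∈ F, p) ^ e ≤ (∏ p ∈ F, (p - 1)) ^ e * ∏ p ∈ F, p := by
  rw [← Finset.prod_pow, ← Finset.prod_pow, ← Finset.prod_mul_distrib]
  exact Finset.prod_le_prod' h

lemma tot_key {m : ℕ} (hm : 1 ≤ m) {j : ℕ}
    (h : (∏ p ∈ m.primeFactors, p) ≤ 5 ^ j * ∏ p ∈ m.primeFactors, (p - 1)) :
    m ≤ 5 ^ j * Nat.totient m := by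
  have key := Nat.totient_mul_prod_primeFactors m
  have hQ : 0 < ∏ p ∈ m.primeFactors, (p - 1) := by
    apply Finset.prod_pos
    intro p hp
    have := (Nat.prime_of_mem_primeFactors hp).two_le
    omega
  have : m * (∏ p ∈ m.primeFactors, (p - 1)) ≤ 5 ^ j * Nat.totient m * (∏ p ∈ m.primeFactors, (p - 1)) := by
    calc m * (∏ p ∈ m.primeFactors, (p - 1)) = Nat.totient m * ∏ p ∈ m.primeFactors, p := key.symm
    _ ≤ Nat.totient m * (5 ^ j * ∏ p ∈ m.primeFactors, (p - 1)) := Nat.mul_le_mul_left _ h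
    _ = 5 ^ j * Nat.totient m * (∏ p ∈ m.primeFactors, (p - 1)) := by ring
  exact Nat.le_of_mul_le_mul_right this hQ

lemma tot_minFac {n : ℕ} (h2 : 2 ≤ n) {p : ℕ} (hp : p ∈ n.primeFactors) :
    Nat.totient n * p ≤ n * (p - 1) := by
  have key := Nat.totient_mul_prod_primeFactors n
  rw [← Finset.mul_prod_erase _ _ hp, ← Finset.mul_prod_erase _ (fun p => p - 1) hp] at key
  have hle : (∏ q ∈ n.primeFactors.erase p, (q - 1)) ≤ ∏ q ∈ n.primeFactors.erase p, q :=
    Finset.prod_le_prod' (fun q _ => by omega)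
  have hpos : 0 < ∏ q ∈ n.primeFactors.erase p, q := by
    apply Finset.prod_pos
    intro q hq
    exact (Nat.prime_of_mem_primeFactors (Finset.mem_of_mem_erase hq)).pos
  have : Nat.totient n * p * (∏ q ∈ n.primeFactors.erase p, q)
      ≤ n * (p - 1) * (∏ q ∈ n.primeFactors.erase p, q) := by
    calc Nat.totient n * p * (∏ q ∈ n.primeFactors.erase p, q)
        = Nat.totient n * (p * ∏ q ∈ n.primeFactors.erase p, q) := by ring
    _ = n * ((p - 1) * ∏ q ∈ n.primeFactors.erase p, (q - 1)) := key
    _ = n * (p - 1) * ∏ q ∈ n.primeFactors.erase p, (q - 1) := by ring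
    _ ≤ n * (p - 1) * ∏ q ∈ n.primeFactors.erase p, q := Nat.mul_le_mul_left _ hle
  exact Nat.le_of_mul_le_mul_right this hpos


lemma odd_case {n : ℕ} (hn : n % 2 = 1) (h3 : 3 ≤ n) :
    ∏ p ∈ (C n).primeFactors, p
      ≤ 5 ^ (n - Nat.totient n) * ∏ p ∈ (C n).primeFactors, (p - 1) := by
  set F := (C n).primeFactors with hF
  set P := ∏ p ∈ F, p with hP
  set Q := ∏ p ∈ F, (p - 1) with hQ
  set p₀ := n.minFac with hp₀def
  set j := n - Nat.totient n with hj
  set e := 2 * p₀ - 2 with he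
  have hp₀ : p₀.Prime := Nat.minFac_prime (by omega)
  have hp₀3 : 3 ≤ p₀ := by
    have h2 := hp₀.two_le
    rcases Nat.lt_or_ge p₀ 3 with h | h
    · exfalso
      have : p₀ = 2 := by omega
      have hdvd := Nat.minFac_dvd n
      rw [← hp₀def, this] at hdvd
      omega
    · exact h
  have he4 : 4 ≤ e := by omega
  have hFe : ∀ p ∈ F, e + 1 ≤ p := by
    intro p hp
    have hq := Nat.prime_of_mem_primeFactors hp
    have hd := Nat.dvd_of_mem_primeFactors hp
    have := factor_large hn h3 hq hd
    omega
  have hPe : P ^ e ≤ Q ^ e * P := prod_bound e (fun p hp => bern (hFe p hp))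
  have hPC : P ≤ C n := Nat.le_of_dvd (C_pos (by omega)) (Nat.prod_primeFactors_dvd _)
  have hC6 : C n ≤ 6 ^ n := C_le_pow6 n
  have hmem : p₀ ∈ n.primeFactors :=
    Nat.mem_primeFactors.mpr ⟨hp₀, Nat.minFac_dvd n, by omega⟩
  have htot := tot_minFac (by omega : 2 ≤ n) hmem
  have htle := Nat.totient_le n
  have hjn : n ≤ p₀ * j := by
    have e1 : Nat.totient n + j = n := by omega
    zify [show 1 ≤ p₀ by omega] at htot
    zify
    nlinarith [htot]
  have h4n : 4 * n ≤ 3 * (j * e) := by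
    have h1 : 4 * p₀ ≤ 3 * e := by omega
    calc 4 * n ≤ 4 * (p₀ * j) := by omega
    _ = (4 * p₀) * j := by ring
    _ ≤ (3 * e) * j := Nat.mul_le_mul_right _ h1
    _ = 3 * (j * e) := by ring
  have h6n : 6 ^ n ≤ 5 ^ (j * e) := by
    have hcube : (6 ^ n) ^ 3 ≤ (5 ^ (j * e)) ^ 3 := by
      rw [← pow_mul, ← pow_mul]
      calc 6 ^ (n * 3) = (6 ^ 3) ^ n := by rw [← pow_mul, Nat.mul_comm]
      _ = 216 ^ n := by norm_num
      _ ≤ 625 ^ n := Nat.pow_le_pow_left (by norm_num) n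
      _ = 5 ^ (4 * n) := by rw [show (625:ℕ) = 5 ^ 4 by norm_num, ← pow_mul, Nat.mul_comm]
      _ ≤ 5 ^ (j * e * 3) := Nat.pow_le_pow_right (by norm_num) (by omega)
    exact (Nat.pow_le_pow_iff_left (by norm_num : (3:ℕ) ≠ 0)).mp hcube
  have final : P ^ e ≤ (5 ^ j * Q) ^ e := by
    calc P ^ e ≤ Q ^ e * P := hPe
    _ ≤ Q ^ e * 6 ^ n := Nat.mul_le_mul_left _ (hPC.trans hC6)
    _ ≤ Q ^ e * 5 ^ (j * e) := Nat.mul_le_mul_left _ h6n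
    _ = (5 ^ j * Q) ^ e := by rw [mul_pow, ← pow_mul]; ring
  exact (Nat.pow_le_pow_iff_left (by omega : e ≠ 0)).mp final

lemma even_case {n : ℕ} (hn : n % 2 = 0) (h4 : 4 ≤ n) :
    ∏ p ∈ (C n).primeFactors, p
      ≤ 5 ^ (n - Nat.totient n) * ∏ p ∈ (C n).primeFactors, (p - 1) := by
  classical
  set F := (C n).primeFactors with hF
  set j := n - Nat.totient n with hj
  set Fb := F.filter (fun p => 5 ≤ p) with hFb
  set Fs := F.filter (fun p => ¬ 5 ≤ p) with hFs
  have hsplitP : (∏ p ∈ Fb, p) * (∏ p ∈ Fs, p) = ∏ p ∈ F, p :=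
    Finset.prod_filter_mul_prod_filter_not F _ _
  have hsplitQ : (∏ p ∈ Fb, (p-1)) * (∏ p ∈ Fs, (p-1)) = ∏ p ∈ F, (p-1) :=
    Finset.prod_filter_mul_prod_filter_not F _ _
  have hFprime : ∀ p ∈ F, p.Prime := fun p hp => Nat.prime_of_mem_primeFactors hp
  -- small part
  have hsub : Fs ⊆ ({2, 3} : Finset ℕ) := by
    intro p hp
    rw [hFs, Finset.mem_filter] at hp
    obtain ⟨hpF, hp5⟩ := hp
    have hprime := hFprime p hpF
    have h2 := hprime.two_le
    have : p = 2 ∨ p = 3 ∨ p = 4 := by omega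
    rcases this with rfl | rfl | rfl
    · simp
    · simp
    · exact absurd hprime (by norm_num)
  have hPs : (∏ p ∈ Fs, p) ≤ 6 := by
    have hstep : ∀ i ∈ ({2, 3} : Finset ℕ), i ∉ Fs → 1 ≤ (fun p => p) i := by
      intro i hi _
      simp only [Finset.mem_insert, Finset.mem_singleton] at hi
      simp only
      omega
    have h6 : (∏ p ∈ ({2,3} : Finset ℕ), p) = 6 := by decide
    have h7 : (∏ p ∈ Fs, p) ≤ ∏ p ∈ ({2,3} : Finset ℕ), p :=
      Finset.prod_le_prod_of_subset_of_one_le' (f := fun p => p) hsub hstep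
    omega
  have hQs : 1 ≤ ∏ p ∈ Fs, (p - 1) := by
    apply Finset.one_le_prod'
    intro p hp
    have := (hFprime p (Finset.mem_of_mem_filter p hp)).two_le
    omega
  have hQb : (∏ p ∈ Fb, (p-1)) ≤ ∏ p ∈ F, (p-1) := by
    rw [← hsplitQ]
    exact Nat.le_mul_of_pos_right _ hQs
  have hPb7 : (∏ p ∈ Fb, p) ^ 7 ≤ (∏ p ∈ Fb, (p-1)) ^ 7 * ∏ p ∈ Fb, p := by
    apply prod_bound
    intro p hp
    rw [hFb, Finset.mem_filter] at hp
    exact seven hp.2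
  have hPsp : 1 ≤ ∏ p ∈ Fs, p := by
    apply Finset.one_le_prod'
    intro p hp
    exact (hFprime p (Finset.mem_of_mem_filter p hp)).one_lt.le
  have hPbC : (∏ p ∈ Fb, p) ≤ 6 ^ n := by
    have h1 : (∏ p ∈ Fb, p) ≤ ∏ p ∈ F, p := by
      rw [← hsplitP]
      exact Nat.le_mul_of_pos_right _ hPsp
    have h2 : (∏ p ∈ F, p) ≤ C n := Nat.le_of_dvd (C_pos (by omega)) (Nat.prod_primeFactors_dvd _)
    exact h1.trans (h2.trans (C_le_pow6 n))
  -- totient bound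
  have hmem2 : 2 ∈ n.primeFactors :=
    Nat.mem_primeFactors.mpr ⟨Nat.prime_two, by omega, by omega⟩
  have htot := tot_minFac (by omega : 2 ≤ n) hmem2
  have htle := Nat.totient_le n
  have hjn : n ≤ 2 * j := by
    norm_num at htot
    omega
  -- numeric: 6 ^ (n + 7) ≤ 5 ^ (7 * j)
  have h67 : 6 ^ (n + 7) ≤ 5 ^ (7 * j) := by
    have hsq : (6 ^ (n + 7)) ^ 2 ≤ (5 ^ (7 * j)) ^ 2 := by
      rw [← pow_mul, ← pow_mul]
      calc 6 ^ ((n + 7) * 2) = 36 ^ n * 6 ^ 14 := by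
            rw [show (n + 7) * 2 = 2 * n + 14 by ring, pow_add, pow_mul]
            norm_num
      _ ≤ 36 ^ n * 2170 ^ n := by
            apply Nat.mul_le_mul_left
            calc (6:ℕ) ^ 14 ≤ 2170 ^ 4 := by norm_num
            _ ≤ 2170 ^ n := Nat.pow_le_pow_right (by norm_num) h4
      _ = (36 * 2170) ^ n := by rw [mul_pow]
      _ ≤ 78125 ^ n := Nat.pow_le_pow_left (by norm_num) n
      _ = 5 ^ (7 * n) := by rw [show (78125:ℕ) = 5 ^ 7 by norm_num, ← pow_mul]
      _ ≤ 5 ^ (7 * j * 2) := Nat.pow_le_pow_right (by norm_num) (by omega)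
    exact (Nat.pow_le_pow_iff_left (by norm_num : (2:ℕ) ≠ 0)).mp hsq
  have final : (∏ p ∈ F, p) ^ 7 ≤ (5 ^ j * ∏ p ∈ F, (p-1)) ^ 7 := by
    calc (∏ p ∈ F, p) ^ 7 = (∏ p ∈ Fb, p) ^ 7 * (∏ p ∈ Fs, p) ^ 7 := by
          rw [← hsplitP, mul_pow]
    _ ≤ ((∏ p ∈ Fb, (p-1)) ^ 7 * ∏ p ∈ Fb, p) * 6 ^ 7 :=
          Nat.mul_le_mul hPb7 (Nat.pow_le_pow_left hPs 7)
    _ ≤ ((∏ p ∈ Fb, (p-1)) ^ 7 * 6 ^ n) * 6 ^ 7 :=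
          Nat.mul_le_mul_right _ (Nat.mul_le_mul_left _ hPbC)
    _ = (∏ p ∈ Fb, (p-1)) ^ 7 * 6 ^ (n + 7) := by rw [pow_add]; ring
    _ ≤ (∏ p ∈ Fb, (p-1)) ^ 7 * 5 ^ (7 * j) := Nat.mul_le_mul_left _ h67
    _ ≤ (∏ p ∈ F, (p-1)) ^ 7 * 5 ^ (7 * j) :=
          Nat.mul_le_mul_right _ (Nat.pow_le_pow_left hQb 7)
    _ = (5 ^ j * ∏ p ∈ F, (p-1)) ^ 7 := by rw [mul_pow, ← pow_mul]; ring
  exact (Nat.pow_le_pow_iff_left (by norm_num : (7:ℕ) ≠ 0)).mp final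

end Aux

open Aux in
theorem stmt13 : ∀ n : ℕ, 1 ≤ n → B (Nat.totient n) ≤ Nat.totient (B n) := by
  intro n hn
  rw [B_eq_C, B_eq_C]
  rcases Nat.lt_or_ge n 3 with h3 | h3
  · interval_cases n
    · -- n = 1
      rw [Nat.totient_one]
      show C 1 ≤ Nat.totient (C 1)
      decide
    · -- n = 2
      show C (Nat.totient 2) ≤ Nat.totient (C 2)
      rw [Nat.totient_two]
      show C 1 ≤ Nat.totient 6
      decide
  · have hC1 : 1 ≤ C n := C_pos (by omega)
    set j := n - Nat.totient n with hj
    have hkey : ∏ p ∈ (C n).primeFactors, p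
        ≤ 5 ^ j * ∏ p ∈ (C n).primeFactors, (p - 1) := by
      rcases Nat.even_or_odd n with he | ho
      · exact even_case (Nat.even_iff.mp he) (by have := Nat.even_iff.mp he; omega)
      · exact odd_case (Nat.odd_iff.mp ho) h3
    have htk : C n ≤ 5 ^ j * Nat.totient (C n) := tot_key hC1 hkey
    have htpos : 1 ≤ Nat.totient n := Nat.totient_pos.mpr (by omega)
    have hsum : Nat.totient n + j = n := by have := Nat.totient_le n; omega
    have hch : 5 ^ j * C (Nat.totient n) ≤ C n := by
      have := pow5_le (Nat.totient n) j
      rwa [hsum] at this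
    have : 5 ^ j * C (Nat.totient n) ≤ 5 ^ j * Nat.totient (C n) := hch.trans htk
    exact Nat.le_of_mul_le_mul_left this (pow_pos (by norm_num) j)
end
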